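/- For any finite tree T and any vertex u of T, φ'_{T,u}(1) / (1 + φ_{T,u}(1)) ≤ φ_{T,u}(1) / 2, with equality if and only if T is a path and u is a leaf of T (including the case where T is the single vertex u). -/

import Mathlib

set_option linter.unusedSectionVars false
set_option maxHeartbeats 1000000



open Finset Polynomial

variable {V : Type*}

/-- The vertex sets of the subtrees of `G` that lie inside the set `S` and contain
the vertex `w` : nonempty connected induced subgraphs. -/
noncomputable def subtreesIn [Fintype V] [DecidableEq V] (G : SimpleGraph V) (S : Set V)
    (w : V) : Finset (Finset V) := by
  classical
  exact Finset.univ.filter fun A => w ∈ A ∧ (A : Set V) ⊆ S ∧ (G.induce (A : Set V)).Connected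

/-- The vertex sets of the subtrees of `G` containing `w`. -/
noncomputable def subtrees [Fintype V] [DecidableEq V] (G : SimpleGraph V) (w : V) :
    Finset (Finset V) := subtreesIn G Set.univ w

/-- The generating polynomial `φ_{T,w}` of subtrees of `G` inside `S` containing `w`,
counted by order. -/
noncomputable def subtreePolyIn [Fintype V] [DecidableEq V] (G : SimpleGraph V) (S : Set V)
    (w : V) : Polynomial ℝ := ∑ A ∈ subtreesIn G S w, X ^ A.card

/-- The generating polynomial `φ_{T,w}` of subtrees of `G` containing `w`. -/
noncomputable def subtreePoly [Fintype V] [DecidableEq V] (G : SimpleGraph V) (w : V) :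
    Polynomial ℝ := subtreePolyIn G Set.univ w

/-- The local mean subtree order `μ(G; w)`: the average order of subtrees of `G`
containing `w`. -/
noncomputable def meanOrder [Fintype V] [DecidableEq V] (G : SimpleGraph V) (w : V) : ℝ :=
  (∑ A ∈ subtrees G w, (A.card : ℝ)) / ((subtrees G w).card : ℝ)

/-- The vertex set of the connected component of `G - D` containing `w`. -/
def compDel (G : SimpleGraph V) (D : Set V) (w : V) : Set V :=
  {x | ∃ p : G.Walk w x, ∀ y ∈ p.support, y ∉ D}

/-- The neighbours of `u` as a `Finset`. -/
noncomputable def nbrFinset [Fintype V] (G : SimpleGraph V) (u : V) : Finset V := by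
  classical
  exact Finset.univ.filter fun w => G.Adj u w

/-- `G` is a path: a tree all of whose vertices have degree at most `2`. -/
def IsPathGraph [Fintype V] (G : SimpleGraph V) : Prop :=
  G.IsTree ∧ ∀ v : V, (G.neighborSet v).ncard ≤ 2

/-- The induced subgraph of `G` on `S` is a path (as a subgraph of a tree:
connected with all degrees within `S` at most `2`). -/
def IsPathOn (G : SimpleGraph V) (S : Set V) : Prop :=
  (G.induce S).Connected ∧ ∀ x ∈ S, (G.neighborSet x ∩ S).ncard ≤ 2

/-- The partial Kelmans operation on `G` from `v` to `u`, moving the edges between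
`v` and the set `W`: each edge `v w`, `w ∈ W`, is replaced by the edge `u w`. -/
def pkelmans (G : SimpleGraph V) (v u : V) (W : Set V) : SimpleGraph V :=
  SimpleGraph.fromRel fun a b =>
    (G.Adj a b ∧ ¬(a = v ∧ b ∈ W) ∧ ¬(b = v ∧ a ∈ W)) ∨
    (a = u ∧ b ∈ W ∧ G.Adj v b)

/-- The Kelmans operation on `G` from `v` to `u`: every edge `v w` with
`w ∈ N(v) \ {u}` is replaced by the edge `u w`. -/
def kelmans (G : SimpleGraph V) (v u : V) : SimpleGraph V :=
  pkelmans G v u (G.neighborSet v \ {u})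

namespace SubtreeAux

open SimpleGraph

variable [Fintype V] [DecidableEq V] {G : SimpleGraph V}

/-- The canonical path from `u` to `v` in a tree. -/
noncomputable def cp (hG : G.IsTree) (u v : V) : G.Walk u v :=
  (hG.existsUnique_path u v).exists.choose

lemma cp_isPath (hG : G.IsTree) (u v : V) : (cp hG u v).IsPath :=
  (hG.existsUnique_path u v).exists.choose_spec

lemma cp_eq (hG : G.IsTree) {u v : V} {p : G.Walk u v} (hp : p.IsPath) : p = cp hG u v :=
  congrArg Subtype.val (hG.IsAcyclic.path_unique ⟨p, hp⟩ ⟨_, cp_isPath hG u v⟩)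

/-- The support of the canonical path from `u` to `v`, as a `Finset`. -/
noncomputable def P (hG : G.IsTree) (u v : V) : Finset V := (cp hG u v).support.toFinset

lemma mem_subtrees_iff {u : V} {A : Finset V} :
    A ∈ subtrees G u ↔ u ∈ A ∧ (G.induce (A : Set V)).Connected := by
  simp [subtrees, subtreesIn, Set.subset_univ]

lemma mem_P (hG : G.IsTree) {u v x : V} :
    x ∈ P hG u v ↔ x ∈ (cp hG u v).support := List.mem_toFinset

lemma self_mem_P (hG : G.IsTree) (u v : V) : v ∈ P hG u v :=
  (mem_P hG).2 (cp hG u v).end_mem_support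

lemma start_mem_P (hG : G.IsTree) (u v : V) : u ∈ P hG u v :=
  (mem_P hG).2 (cp hG u v).start_mem_support

lemma P_mem (hG : G.IsTree) (u v : V) : P hG u v ∈ subtrees G u := by
  rw [mem_subtrees_iff]
  refine ⟨start_mem_P hG u v, ?_⟩
  have h := (cp hG u v).connected_induce_support
  have : ((P hG u v : Finset V) : Set V) = {x | x ∈ (cp hG u v).support} := by
    ext x; simp [P, List.coe_toFinset]
  rw [this]
  exact h

lemma P_subset (hG : G.IsTree) {u v : V} {A : Finset V} (hA : A ∈ subtrees G u)
    (hv : v ∈ A) : P hG u v ⊆ A := by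
  rw [mem_subtrees_iff] at hA
  obtain ⟨hu, hconn⟩ := hA
  obtain ⟨q⟩ := hconn.preconnected ⟨u, hu⟩ ⟨v, hv⟩
  let f : G.induce (A : Set V) →g G := (SimpleGraph.Embedding.induce (A : Set V)).toHom
  let q' : G.Walk u v := q.map f
  have hsup : ∀ x ∈ q'.support, x ∈ A := by
    intro x hx
    rw [show q'.support = q.support.map f from SimpleGraph.Walk.support_map (f := f) (p := q)] at hx
    obtain ⟨y, _, rfl⟩ := List.mem_map.1 hx
    exact y.2
  have hq'path := q'.toPath.2
  have := cp_eq hG hq'path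
  intro x hx
  rw [mem_P hG] at hx
  rw [← this] at hx
  exact hsup x (q'.support_toPath_subset hx)

lemma P_subset_of_mem (hG : G.IsTree) {u v w : V} (h : v ∈ P hG u w) :
    P hG u v ⊆ P hG u w :=
  P_subset hG (P_mem hG u w) h

lemma card_P (hG : G.IsTree) (u v : V) : (P hG u v).card = (cp hG u v).length + 1 := by
  rw [P, List.toFinset_card_of_nodup (cp_isPath hG u v).support_nodup,
    SimpleGraph.Walk.length_support]

lemma P_inj (hG : G.IsTree) {u v w : V} (h : P hG u v = P hG u w) : v = w := by
  have hw : w ∈ (cp hG u v).support := (mem_P hG).1 (h ▸ self_mem_P hG u w)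
  have hq : (cp hG u v).takeUntil w hw = cp hG u w :=
    cp_eq hG ((cp_isPath hG u v).takeUntil hw)
  have hcard : (cp hG u w).length = (cp hG u v).length := by
    have := congrArg Finset.card h
    rw [card_P, card_P] at this
    omega
  have hspec := (cp hG u v).take_spec hw
  have hlen := congrArg SimpleGraph.Walk.length hspec
  rw [SimpleGraph.Walk.length_append, hq, hcard] at hlen
  have : ((cp hG u v).dropUntil w hw).length = 0 := by omega
  exact (SimpleGraph.Walk.eq_of_length_eq_zero this).symm

end SubtreeAux

set_option linter.unusedSectionVars false

namespace SubtreeAux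

open SimpleGraph

variable [Fintype V] [DecidableEq V] {G : SimpleGraph V}

lemma P_comparable (hG : G.IsTree) {u v₀ v w : V} (hv : v ∈ P hG u v₀) (hw : w ∈ P hG u v₀) :
    P hG u v ⊆ P hG u w ∨ P hG u w ⊆ P hG u v := by
  rw [mem_P hG] at hv hw
  set p₀ := cp hG u v₀ with hp₀
  by_cases hwt : w ∈ (p₀.takeUntil v hv).support
  · right
    apply P_subset_of_mem hG
    rw [mem_P hG, ← cp_eq hG ((cp_isPath hG u v₀).takeUntil hv)]
    exact hwt
  · have hmem : w ∈ ((p₀.takeUntil v hv).append (p₀.dropUntil v hv)).support := by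
      rw [p₀.take_spec hv]; exact hw
    rw [SimpleGraph.Walk.mem_support_append_iff] at hmem
    have hwd : w ∈ (p₀.dropUntil v hv).support := hmem.resolve_left hwt
    left
    set r : G.Walk u w := (p₀.takeUntil v hv).append ((p₀.dropUntil v hv).takeUntil w hwd)
      with hr
    have hreq : r.append (((p₀.dropUntil v hv)).dropUntil w hwd) = p₀ := by
      rw [hr, ← SimpleGraph.Walk.append_assoc, (p₀.dropUntil v hv).take_spec hwd,
        p₀.take_spec hv]
    have hrpath : r.IsPath := by
      apply SimpleGraph.Walk.IsPath.of_append_left (q := ((p₀.dropUntil v hv)).dropUntil w hwd)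
      rw [hreq]; exact cp_isPath hG u v₀
    apply P_subset_of_mem hG
    rw [mem_P hG, ← cp_eq hG hrpath, hr, SimpleGraph.Walk.mem_support_append_iff]
    exact Or.inl (p₀.takeUntil v hv).end_mem_support

lemma univ_mem (hG : G.IsTree) (u : V) : (Finset.univ : Finset V) ∈ subtrees G u := by
  rw [mem_subtrees_iff]
  refine ⟨Finset.mem_univ u, ?_⟩
  rw [Finset.coe_univ]
  exact (G.induceUnivIso.connected_iff).2 hG.isConnected


lemma incidence_le {a b : V} (p : G.Walk a b) (hp : p.IsPath) :
    (∀ x : V, (Finset.univ.filter fun y => s(x, y) ∈ p.edges).card ≤ 2) ∧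
    (Finset.univ.filter fun y => s(a, y) ∈ p.edges).card ≤ 1 := by
  induction p with
  | nil => simp
  | @cons a c b h q ih =>
    rw [SimpleGraph.Walk.cons_isPath_iff] at hp
    obtain ⟨hq, ha⟩ := hp
    obtain ⟨ih1, ih2⟩ := ih hq
    have hstart : (Finset.univ.filter fun y => s(a, y) ∈ (SimpleGraph.Walk.cons h q).edges).card
        ≤ 1 := by
      have hsub : (Finset.univ.filter fun y => s(a, y) ∈ (SimpleGraph.Walk.cons h q).edges)
          ⊆ {c} := by
        intro y hy
        rw [Finset.mem_filter, SimpleGraph.Walk.edges_cons, List.mem_cons] at hy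
        rcases hy.2 with h1 | h1
        · rw [Sym2.eq_iff] at h1
          rcases h1 with ⟨-, rfl⟩ | ⟨rfl, rfl⟩
          · exact Finset.mem_singleton_self _
          · exact absurd rfl h.ne
        · exact absurd (q.fst_mem_support_of_mem_edges h1) ha
      calc _ ≤ ({c} : Finset V).card := Finset.card_le_card hsub
        _ = 1 := Finset.card_singleton c
    refine ⟨fun x => ?_, hstart⟩
    by_cases hxa : x = a
    · subst hxa; omega
    by_cases hxc : x = c
    · subst hxc
      have hsub : (Finset.univ.filter fun y => s(x, y) ∈ (SimpleGraph.Walk.cons h q).edges)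
          ⊆ insert a (Finset.univ.filter fun y => s(x, y) ∈ q.edges) := by
        intro y hy
        rw [Finset.mem_filter, SimpleGraph.Walk.edges_cons, List.mem_cons] at hy
        rcases hy.2 with h1 | h1
        · rw [Sym2.eq_iff] at h1
          rcases h1 with ⟨rfl, rfl⟩ | ⟨-, rfl⟩
          · exact absurd rfl hxa
          · exact Finset.mem_insert_self _ _
        · exact Finset.mem_insert_of_mem (Finset.mem_filter.2 ⟨Finset.mem_univ _, h1⟩)
      calc _ ≤ _ := Finset.card_le_card hsub
        _ ≤ (Finset.univ.filter fun y => s(x, y) ∈ q.edges).card + 1 :=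
            Finset.card_insert_le _ _
        _ ≤ 2 := by omega
    · have hsub : (Finset.univ.filter fun y => s(x, y) ∈ (SimpleGraph.Walk.cons h q).edges)
          ⊆ Finset.univ.filter fun y => s(x, y) ∈ q.edges := by
        intro y hy
        rw [Finset.mem_filter, SimpleGraph.Walk.edges_cons, List.mem_cons] at hy
        rcases hy.2 with h1 | h1
        · rw [Sym2.eq_iff] at h1
          rcases h1 with ⟨rfl, rfl⟩ | ⟨rfl, rfl⟩
          · exact absurd rfl hxa
          · exact absurd rfl hxc
        · exact Finset.mem_filter.2 ⟨Finset.mem_univ _, h1⟩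
      exact le_trans (Finset.card_le_card hsub) (ih1 x)


lemma adj_edge_mem (hG : G.IsTree) {u v₀ : V} (hham : ∀ x : V, x ∈ P hG u v₀)
    {x y : V} (hxy : G.Adj x y) : s(x, y) ∈ (cp hG u v₀).edges := by
  set p₀ := cp hG u v₀ with hp₀
  have hx : x ∈ p₀.support := (mem_P hG).1 (hham x)
  have hy : y ∈ ((p₀.takeUntil x hx).append (p₀.dropUntil x hx)).support := by
    rw [p₀.take_spec hx]; exact (mem_P hG).1 (hham y)
  rw [SimpleGraph.Walk.mem_support_append_iff] at hy
  rcases hy with hyt | hyd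
  · -- y before x : single edge path y → x
    have hqpath : ((p₀.takeUntil x hx).dropUntil y hyt).IsPath :=
      ((cp_isPath hG u v₀).takeUntil hx).dropUntil hyt
    have hspath : (SimpleGraph.Walk.cons hxy.symm SimpleGraph.Walk.nil : G.Walk y x).IsPath := by
      simp [SimpleGraph.Walk.cons_isPath_iff, hxy.ne']
    have heq : (SimpleGraph.Walk.cons hxy.symm SimpleGraph.Walk.nil : G.Walk y x)
        = (p₀.takeUntil x hx).dropUntil y hyt := (cp_eq hG hspath).trans (cp_eq hG hqpath).symm
    have hmem : s(y, x) ∈ ((p₀.takeUntil x hx).dropUntil y hyt).edges := by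
      rw [← heq]; simp
    rw [Sym2.eq_swap]
    exact (p₀.edges_takeUntil_subset hx) ((p₀.takeUntil x hx).edges_dropUntil_subset hyt hmem)
  · -- y after x : single edge path x → y
    have hqpath : ((p₀.dropUntil x hx).takeUntil y hyd).IsPath :=
      ((cp_isPath hG u v₀).dropUntil hx).takeUntil hyd
    have hspath : (SimpleGraph.Walk.cons hxy SimpleGraph.Walk.nil : G.Walk x y).IsPath := by
      simp [SimpleGraph.Walk.cons_isPath_iff, hxy.ne]
    have heq : (SimpleGraph.Walk.cons hxy SimpleGraph.Walk.nil : G.Walk x y)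
        = (p₀.dropUntil x hx).takeUntil y hyd := (cp_eq hG hspath).trans (cp_eq hG hqpath).symm
    have hmem : s(x, y) ∈ ((p₀.dropUntil x hx).takeUntil y hyd).edges := by
      rw [← heq]; simp
    exact (p₀.edges_dropUntil_subset hx) ((p₀.dropUntil x hx).edges_takeUntil_subset hyd hmem)

lemma ham_to_path (hG : G.IsTree) {u v₀ : V} (hham : P hG u v₀ = Finset.univ) :
    IsPathGraph G ∧ (G.neighborSet u).ncard ≤ 1 := by
  have hham' : ∀ x : V, x ∈ P hG u v₀ := fun x => hham ▸ Finset.mem_univ x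
  set p₀ := cp hG u v₀ with hp₀
  have hinc := incidence_le p₀ (cp_isPath hG u v₀)
  constructor
  · refine ⟨hG, fun v => ?_⟩
    have hsub : G.neighborSet v ⊆ ↑(Finset.univ.filter fun y => s(v, y) ∈ p₀.edges) := by
      intro y hy
      simp only [Finset.coe_filter, Set.mem_setOf_eq, Finset.mem_univ, true_and]
      exact adj_edge_mem hG hham' hy
    calc (G.neighborSet v).ncard ≤ _ := Set.ncard_le_ncard hsub (Set.toFinite _)
      _ = (Finset.univ.filter fun y => s(v, y) ∈ p₀.edges).card := Set.ncard_coe_finset _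
      _ ≤ 2 := hinc.1 v
  · have hsub : G.neighborSet u ⊆ ↑(Finset.univ.filter fun y => s(u, y) ∈ p₀.edges) := by
      intro y hy
      simp only [Finset.coe_filter, Set.mem_setOf_eq, Finset.mem_univ, true_and]
      exact adj_edge_mem hG hham' hy
    calc (G.neighborSet u).ncard ≤ _ := Set.ncard_le_ncard hsub (Set.toFinite _)
      _ = (Finset.univ.filter fun y => s(u, y) ∈ p₀.edges).card := Set.ncard_coe_finset _
      _ ≤ 1 := hinc.2


lemma path_to_ham (hG : G.IsTree) (u : V) (hpath : IsPathGraph G)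
    (hleaf : (G.neighborSet u).ncard ≤ 1) : ∃ v₀ : V, P hG u v₀ = Finset.univ := by
  obtain ⟨v₀, -, hmax⟩ := Finset.univ.exists_max_image (fun v => (P hG u v).card)
    ⟨u, Finset.mem_univ u⟩
  refine ⟨v₀, ?_⟩
  by_contra hne
  have hex : ∃ x : V, x ∉ P hG u v₀ := by
    by_contra h
    push_neg at h
    exact hne (Finset.eq_univ_iff_forall.2 h)
  obtain ⟨x, hx⟩ := hex
  set p₀ := cp hG u v₀ with hp₀
  obtain ⟨d, -, hdS, hdnS⟩ := (cp hG u x).exists_boundary_dart (↑(P hG u v₀))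
    (by exact_mod_cast start_mem_P hG u v₀) (by exact_mod_cast hx)
  set a := d.fst with hadef
  set b := d.snd with hbdef
  have hab : G.Adj a b := d.adj
  have haP : a ∈ P hG u v₀ := by exact_mod_cast hdS
  have hbP : b ∉ P hG u v₀ := by exact_mod_cast hdnS
  have ha : a ∈ p₀.support := (mem_P hG).1 haP
  have hbsup : b ∉ p₀.support := fun h => hbP ((mem_P hG).2 h)
  by_cases hav : a = v₀
  · -- extend the path by the edge a-b
    subst hav
    have hr : (p₀.concat hab).IsPath := by
      rw [SimpleGraph.Walk.isPath_def, SimpleGraph.Walk.support_concat,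
        List.nodup_append]
      refine ⟨(cp_isPath hG u a).support_nodup, List.nodup_singleton b, ?_⟩
      intro t ht t' htb heq
      rw [List.mem_singleton] at htb
      exact hbsup (by rw [← htb, ← heq]; exact ht)
    have hcard : (P hG u b).card = p₀.length + 2 := by
      rw [card_P, ← cp_eq hG hr, SimpleGraph.Walk.length_concat]
    have := hmax b (Finset.mem_univ b)
    rw [hcard, card_P, ← hp₀] at this
    omega
  by_cases hau : a = u
  · -- u has two neighbours
    subst hau
    have hnn : ¬ p₀.Nil := by
      rw [SimpleGraph.Walk.nil_iff_length_eq]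
      intro h
      exact hav (SimpleGraph.Walk.eq_of_length_eq_zero h)
    obtain ⟨c, hac, q, hq⟩ := SimpleGraph.Walk.not_nil_iff.1 hnn
    have hcsup : c ∈ p₀.support := by
      rw [hq, SimpleGraph.Walk.support_cons]
      exact List.mem_cons_of_mem _ q.start_mem_support
    have hbc : b ≠ c := fun h => hbsup (h ▸ hcsup)
    have : 1 < (G.neighborSet a).ncard := by
      rw [Set.one_lt_ncard (Set.toFinite _)]
      exact ⟨b, hab, c, hac, hbc⟩
    omega
  · -- a is interior : three neighbours
    have htn : ¬ (p₀.takeUntil a ha).Nil := by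
      rw [SimpleGraph.Walk.nil_iff_length_eq]
      intro h
      exact hau (SimpleGraph.Walk.eq_of_length_eq_zero h).symm
    have hdn : ¬ (p₀.dropUntil a ha).Nil := by
      rw [SimpleGraph.Walk.nil_iff_length_eq]
      intro h
      exact hav (SimpleGraph.Walk.eq_of_length_eq_zero h)
    have hrn : ¬ (p₀.takeUntil a ha).reverse.Nil := by
      rw [SimpleGraph.Walk.nil_iff_length_eq, SimpleGraph.Walk.length_reverse]
      rw [SimpleGraph.Walk.nil_iff_length_eq] at htn
      exact htn
    obtain ⟨y, hay, q1, hq1⟩ := SimpleGraph.Walk.not_nil_iff.1 hrn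
    obtain ⟨z, haz, q2, hq2⟩ := SimpleGraph.Walk.not_nil_iff.1 hdn
    have hysup : y ∈ (p₀.takeUntil a ha).support := by
      have : y ∈ (p₀.takeUntil a ha).reverse.support := by
        rw [hq1, SimpleGraph.Walk.support_cons]
        exact List.mem_cons_of_mem _ q1.start_mem_support
      rwa [SimpleGraph.Walk.support_reverse, List.mem_reverse] at this
    have hzsup : z ∈ (p₀.dropUntil a ha).support.tail := by
      rw [hq2, SimpleGraph.Walk.support_cons, List.tail_cons]
      exact q2.start_mem_support
    have hyz : y ≠ z := by
      have hnd : (((p₀.takeUntil a ha)).support ++ ((p₀.dropUntil a ha)).support.tail).Nodup := by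
        rw [← SimpleGraph.Walk.support_append, p₀.take_spec ha]
        exact (cp_isPath hG u v₀).support_nodup
      have hdisj := (List.nodup_append.1 hnd).2.2
      exact fun h => hdisj y hysup z hzsup h
    have hby : b ≠ y := fun h =>
      hbsup (h ▸ (p₀.support_takeUntil_subset ha hysup))
    have hbz : b ≠ z := fun h =>
      hbsup (h ▸ (p₀.support_dropUntil_subset ha (List.mem_of_mem_tail hzsup)))
    have : 2 < (G.neighborSet a).ncard := by
      rw [Set.two_lt_ncard (Set.toFinite _)]
      exact ⟨b, hab, y, hay, z, haz, hby, hbz, hyz⟩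
    have := hpath.2 a
    omega



lemma subtree_eq_P (hG : G.IsTree) {u v₀ : V} (hham : P hG u v₀ = Finset.univ)
    {A : Finset V} (hA : A ∈ subtrees G u) : ∃ v, A = P hG u v := by
  have hAne : A.Nonempty := ⟨u, (mem_subtrees_iff.1 hA).1⟩
  obtain ⟨v, hvA, hmaxv⟩ := A.exists_max_image (fun v => (P hG u v).card) hAne
  refine ⟨v, subset_antisymm ?_ (P_subset hG hA hvA)⟩
  intro w hw
  have h1 : v ∈ P hG u v₀ := by rw [hham]; exact Finset.mem_univ v
  have h2 : w ∈ P hG u v₀ := by rw [hham]; exact Finset.mem_univ w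
  rcases P_comparable hG h2 h1 with h | h
  · exact h (self_mem_P hG u w)
  · have heq : P hG u v = P hG u w :=
      Finset.eq_of_subset_of_card_le h (hmaxv w hw)
    rw [heq]
    exact self_mem_P hG u w

lemma card_eq_filter (hG : G.IsTree) {u : V} {A : Finset V} (hA : A ∈ subtrees G u) :
    A.card = ((Finset.univ.image (P hG u)).filter (· ⊆ A)).card := by
  apply Finset.card_nbij (i := P hG u)
  · intro v hv
    rw [Finset.mem_coe, Finset.mem_filter]
    exact ⟨Finset.mem_image_of_mem _ (Finset.mem_univ v), P_subset hG hA hv⟩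
  · intro v _ w _ h
    exact P_inj hG h
  · intro B hB
    simp only [Finset.coe_filter, Set.mem_setOf_eq, Finset.mem_filter] at hB
    obtain ⟨hB1, hB2⟩ := hB
    obtain ⟨v, -, rfl⟩ := Finset.mem_image.1 hB1
    exact ⟨v, hB2 (self_mem_P hG u v), rfl⟩


lemma key_count (hG : G.IsTree) (u : V) :
    2 * ∑ A ∈ subtrees G u, A.card
      ≤ (subtrees G u).card * (subtrees G u).card + (subtrees G u).card ∧
    (2 * ∑ A ∈ subtrees G u, A.card
      = (subtrees G u).card * (subtrees G u).card + (subtrees G u).card ↔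
      ∃ v₀ : V, P hG u v₀ = Finset.univ) := by
  classical
  set S := subtrees G u with hS
  set Ps := Finset.univ.image (P hG u) with hPs
  have hPsS : Ps ⊆ S := by
    intro B hB
    obtain ⟨v, -, rfl⟩ := Finset.mem_image.1 hB
    exact P_mem hG u v
  set N := S.card with hN
  have hN1 : 1 ≤ N := Finset.card_pos.2 ⟨P hG u u, P_mem hG u u⟩
  -- split the subset-count into strict part and equal part
  have hsplit : ∀ A ∈ S, (Ps.filter (· ⊆ A)).card
      = (Ps.filter (· ⊂ A)).card + (if A ∈ Ps then 1 else 0) := by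
    intro A _
    have h1 : Ps.filter (· ⊆ A) = Ps.filter (fun B => B ⊂ A ∨ B = A) := by
      apply Finset.filter_congr
      intro B _
      constructor
      · intro h
        rcases lt_or_eq_of_le (le_iff_subset.2 h) with h' | h'
        · exact Or.inl h'
        · exact Or.inr h'
      · rintro (h | rfl)
        · exact h.subset
        · exact subset_rfl
    rw [h1, Finset.filter_or, Finset.card_union_of_disjoint, Finset.filter_eq']
    · by_cases h : A ∈ Ps <;> simp only [h, if_true, if_false, Finset.card_singleton, Finset.card_empty]
    · rw [Finset.disjoint_left]
      rintro B hB1 hB2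
      rw [Finset.mem_filter] at hB1 hB2
      exact absurd (hB2.2 ▸ hB1.2) (lt_irrefl A)
  set F := (S.filter (· ∈ Ps)).card with hF
  have hsum : ∑ A ∈ S, A.card = (∑ A ∈ S, (Ps.filter (· ⊂ A)).card) + F := by
    calc ∑ A ∈ S, A.card = ∑ A ∈ S, (Ps.filter (· ⊆ A)).card :=
          Finset.sum_congr rfl (fun A hA => card_eq_filter hG hA)
      _ = ∑ A ∈ S, ((Ps.filter (· ⊂ A)).card + (if A ∈ Ps then 1 else 0)) :=
          Finset.sum_congr rfl hsplit
      _ = (∑ A ∈ S, (Ps.filter (· ⊂ A)).card) + ∑ A ∈ S, (if A ∈ Ps then 1 else 0) :=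
          Finset.sum_add_distrib
      _ = (∑ A ∈ S, (Ps.filter (· ⊂ A)).card) + F := by rw [hF, Finset.card_filter]
  set X := (S ×ˢ S).filter (fun q => q.2 ∈ Ps ∧ q.2 ⊂ q.1) with hX
  set Y := (S ×ˢ S).filter (fun q => q.1 ∈ Ps ∧ q.1 ⊂ q.2) with hY
  have hXcard : X.card = ∑ A ∈ S, (Ps.filter (· ⊂ A)).card := by
    rw [hX, Finset.card_filter, Finset.sum_product]
    apply Finset.sum_congr rfl
    intro A _
    rw [← Finset.card_filter]
    congr 1
    ext B
    simp only [Finset.mem_filter]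
    exact ⟨fun h => ⟨h.2.1, h.2.2⟩, fun h => ⟨hPsS h.1, h.1, h.2⟩⟩
  have hYcard : Y.card = X.card := by
    apply (Finset.card_nbij (i := Prod.swap) ?_ ?_ ?_).symm
    · intro q hq
      rw [Finset.mem_coe, Finset.mem_filter, Finset.mem_product] at hq ⊢
      exact ⟨⟨hq.1.2, hq.1.1⟩, hq.2⟩
    · intro q _ r _ h
      exact Prod.swap_injective h
    · intro q hq
      refine ⟨q.swap, ?_, Prod.swap_swap q⟩
      rw [Finset.mem_coe, Finset.mem_filter, Finset.mem_product] at hq ⊢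
      exact ⟨⟨hq.1.2, hq.1.1⟩, hq.2⟩
  have hXsub : X ⊆ S.offDiag := by
    intro q hq
    rw [Finset.mem_filter, Finset.mem_product] at hq
    rw [Finset.mem_offDiag]
    exact ⟨hq.1.1, hq.1.2, fun h => (h ▸ hq.2.2).ne rfl⟩
  have hYsub : Y ⊆ S.offDiag := by
    intro q hq
    rw [Finset.mem_filter, Finset.mem_product] at hq
    rw [Finset.mem_offDiag]
    exact ⟨hq.1.1, hq.1.2, fun h => (h ▸ hq.2.2).ne rfl⟩
  have hdisj : Disjoint X Y := by
    rw [Finset.disjoint_left]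
    intro q hq1 hq2
    rw [Finset.mem_filter] at hq1 hq2
    exact absurd rfl (Finset.ssubset_iff_subset_ne.1 (hq1.2.2.trans hq2.2.2)).2
  have hXY : X.card + Y.card ≤ N * N - N := by
    rw [← Finset.card_union_of_disjoint hdisj]
    calc (X ∪ Y).card ≤ S.offDiag.card :=
          Finset.card_le_card (Finset.union_subset hXsub hYsub)
      _ = N * N - N := Finset.offDiag_card S
  have hFN : F ≤ N := Finset.card_le_card (Finset.filter_subset _ _)
  have hNle : N ≤ N * N := Nat.le_mul_of_pos_left N hN1
  constructor
  · omega
  constructor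
  · -- equality forces F = N, hence univ ∈ Ps
    intro heq
    have hF_eq : F = N := by omega
    have hfilter : S.filter (· ∈ Ps) = S :=
      Finset.eq_of_subset_of_card_le (Finset.filter_subset _ _) (le_of_eq hF_eq.symm)
    have huniv : (Finset.univ : Finset V) ∈ Ps := by
      have h1 : (Finset.univ : Finset V) ∈ S.filter (· ∈ Ps) := by
        rw [hfilter]; exact univ_mem hG u
      exact (Finset.mem_filter.1 h1).2
    obtain ⟨v₀, -, hv₀⟩ := Finset.mem_image.1 huniv
    exact ⟨v₀, hv₀⟩
  · rintro ⟨v₀, hham⟩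
    have hF_eq : F = N := by
      rw [hF, hN]
      congr 1
      apply Finset.filter_true_of_mem
      intro A hA
      obtain ⟨v, rfl⟩ := subtree_eq_P hG hham hA
      exact Finset.mem_image_of_mem _ (Finset.mem_univ v)
    have hcover : S.offDiag ⊆ X ∪ Y := by
      intro q hq
      rw [Finset.mem_offDiag] at hq
      obtain ⟨hq1, hq2, hq3⟩ := hq
      obtain ⟨v, hv⟩ := subtree_eq_P hG hham hq1
      obtain ⟨w, hw⟩ := subtree_eq_P hG hham hq2
      have hvP : v ∈ P hG u v₀ := by rw [hham]; exact Finset.mem_univ v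
      have hwP : w ∈ P hG u v₀ := by rw [hham]; exact Finset.mem_univ w
      have hmem1 : q.1 ∈ Ps := hv ▸ Finset.mem_image_of_mem _ (Finset.mem_univ v)
      have hmem2 : q.2 ∈ Ps := hw ▸ Finset.mem_image_of_mem _ (Finset.mem_univ w)
      rcases P_comparable hG hvP hwP with h | h
      · rw [← hv, ← hw] at h
        apply Finset.mem_union_right
        rw [Finset.mem_filter, Finset.mem_product]
        exact ⟨⟨hq1, hq2⟩, hmem1, lt_of_le_of_ne (le_iff_subset.2 h) hq3⟩
      · rw [← hv, ← hw] at h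
        apply Finset.mem_union_left
        rw [Finset.mem_filter, Finset.mem_product]
        exact ⟨⟨hq1, hq2⟩, hmem2, lt_of_le_of_ne (le_iff_subset.2 h) hq3.symm⟩
    have hXY_eq : X.card + Y.card = N * N - N := by
      rw [← Finset.card_union_of_disjoint hdisj]
      have : X ∪ Y = S.offDiag :=
        subset_antisymm (Finset.union_subset hXsub hYsub) hcover
      rw [this, Finset.offDiag_card]
    omega


end SubtreeAux

theorem subtreePoly_deriv_ineq' {V : Type*} [Fintype V] [DecidableEq V]
    (G : SimpleGraph V) (hG : G.IsTree) (u : V) :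
    (Polynomial.derivative ((∑ A ∈ subtrees G u, (Polynomial.X : Polynomial ℝ) ^ A.card))).eval 1
        / (1 + ((∑ A ∈ subtrees G u, (Polynomial.X : Polynomial ℝ) ^ A.card)).eval 1)
        ≤ ((∑ A ∈ subtrees G u, (Polynomial.X : Polynomial ℝ) ^ A.card)).eval 1 / 2 ∧
      ((Polynomial.derivative ((∑ A ∈ subtrees G u, (Polynomial.X : Polynomial ℝ) ^ A.card))).eval 1
          / (1 + ((∑ A ∈ subtrees G u, (Polynomial.X : Polynomial ℝ) ^ A.card)).eval 1)
          = ((∑ A ∈ subtrees G u, (Polynomial.X : Polynomial ℝ) ^ A.card)).eval 1 / 2 ↔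
        IsPathGraph G ∧ (G.neighborSet u).ncard ≤ 1) := by
  classical
  set φ : Polynomial ℝ := ∑ A ∈ subtrees G u, Polynomial.X ^ A.card with hφ
  have heval : φ.eval 1 = ((subtrees G u).card : ℝ) := by
    rw [hφ, Polynomial.eval_finset_sum]
    simp
  have hderiv : (Polynomial.derivative φ).eval 1
      = ((∑ A ∈ subtrees G u, A.card : ℕ) : ℝ) := by
    rw [hφ, map_sum, Polynomial.eval_finset_sum]
    push_cast
    apply Finset.sum_congr rfl
    intro A _
    rw [Polynomial.derivative_X_pow]
    simp
  obtain ⟨hle, hiff⟩ := SubtreeAux.key_count hG u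
  set a := ∑ A ∈ subtrees G u, A.card with ha
  set N := (subtrees G u).card with hNdef
  have hN1 : 1 ≤ N := Finset.card_pos.2 ⟨_, SubtreeAux.P_mem hG u u⟩
  have hpos : (0:ℝ) < 1 + (N:ℝ) := by positivity
  rw [heval, hderiv]
  constructor
  · rw [div_le_div_iff₀ hpos two_pos]
    calc ((a:ℕ):ℝ) * 2 = ((2*a : ℕ) : ℝ) := by push_cast; ring
      _ ≤ ((N*N+N : ℕ) : ℝ) := by exact_mod_cast hle
      _ = (N:ℝ) * (1 + N) := by push_cast; ring
  · rw [div_eq_div_iff hpos.ne' two_pos.ne']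
    constructor
    · intro h
      have h2 : 2 * a = N * N + N := by
        have h' : ((2*a:ℕ):ℝ) = ((N*N+N:ℕ):ℝ) := by push_cast; push_cast at h; linarith
        exact_mod_cast h'
      obtain ⟨v₀, hham⟩ := hiff.1 h2
      exact SubtreeAux.ham_to_path hG hham
    · rintro ⟨hp, hl⟩
      obtain ⟨v₀, hham⟩ := SubtreeAux.path_to_ham hG u hp hl
      have h2 := hiff.2 ⟨v₀, hham⟩
      have h' : ((2*a:ℕ):ℝ) = ((N*N+N:ℕ):ℝ) := by exact_mod_cast h2
      push_cast at h'
      linarith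


/-- For any finite tree `T` and vertex `u`,
`φ'_{T,u}(1) / (1 + φ_{T,u}(1)) ≤ φ_{T,u}(1) / 2`, with equality iff `T` is a path and
`u` is a leaf of `T` (including the one-vertex case). -/
theorem subtreePoly_deriv_ineq {V : Type*} [Fintype V] [DecidableEq V]
    (G : SimpleGraph V) (hG : G.IsTree) (u : V) :
    (Polynomial.derivative (subtreePoly G u)).eval 1 / (1 + (subtreePoly G u).eval 1)
        ≤ (subtreePoly G u).eval 1 / 2 ∧
      ((Polynomial.derivative (subtreePoly G u)).eval 1 / (1 + (subtreePoly G u).eval 1)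
          = (subtreePoly G u).eval 1 / 2 ↔
        IsPathGraph G ∧ (G.neighborSet u).ncard ≤ 1) := by
  classical
  have hst : subtreePoly G u
      = ∑ A ∈ subtrees G u, (Polynomial.X : Polynomial ℝ) ^ A.card := rfl
  rw [hst]
  exact subtreePoly_deriv_ineq' G hG u
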